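/- Fix q ∈ V. The ideal O_G^q equals the intersection ⋂_T P_T taken over all spanning trees T of G, where for each spanning tree T, P_T is the ideal of S generated by {y_e : e ∈ O_T} and O_T is the set of darts of G that are edges of T oriented away from q, i.e. darts e with e₋ adjacent to e₊ in T and dist_T(q, e₊) = dist_T(q, e₋) + 1. Moreover this is the minimal prime decomposition of O_G^q (each P_T is a prime ideal containing O_G^q). -/

import Mathlib

open Finset MvPolynomial

/-! ### Auxiliary lemmas -/

lemma span_X_isPrime {σ : Type} (K : Type) [Field K] (s : Set σ) :
    (Ideal.span (MvPolynomial.X '' s) : Ideal (MvPolynomial σ K)).IsPrime := by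
  classical
  set g : σ → MvPolynomial σ K := fun i => if i ∈ s then 0 else X i with hg
  have hcoeff : ∀ (p : MvPolynomial σ K) (m : σ →₀ ℕ), (∀ i ∈ s, m i = 0) →
      coeff m (aeval g p) = coeff m p := by
    intro p m hm
    conv_lhs => rw [p.as_sum]
    rw [map_sum]
    have hterm : ∀ v ∈ p.support,
        coeff m (aeval g (monomial v (coeff v p))) = if v = m then coeff v p else 0 := by
      intro v _
      rw [aeval_monomial]
      by_cases hv : ∀ i ∈ v.support, ¬ i ∈ s
      · have : (v.prod fun i k => g i ^ k) = monomial v (1 : K) := by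
          rw [Finsupp.prod, ← prod_X_pow_eq_monomial]
          exact Finset.prod_congr rfl fun i hi => by rw [hg]; simp [if_neg (hv i hi)]
        rw [this, algebraMap_eq, C_mul_monomial, mul_one, coeff_monomial]
      · push_neg at hv
        obtain ⟨i, hi, his⟩ := hv
        have : (v.prod fun i k => g i ^ k) = 0 := by
          rw [Finsupp.prod]
          apply Finset.prod_eq_zero hi
          rw [hg]
          simp only [if_pos his]
          exact zero_pow (Finsupp.mem_support_iff.mp hi)
        rw [this, mul_zero, coeff_zero]
        have : v ≠ m := fun h => (Finsupp.mem_support_iff.mp hi) (h ▸ hm i his)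
        rw [if_neg this]
    rw [coeff_sum, Finset.sum_congr rfl hterm, Finset.sum_ite_eq' p.support m (fun v => coeff v p)]
    by_cases h : m ∈ p.support
    · rw [if_pos h]
    · rw [if_neg h, eq_comm]
      exact MvPolynomial.notMem_support_iff.mp h
  have hker : Ideal.span (MvPolynomial.X '' s : Set (MvPolynomial σ K)) =
      RingHom.ker (aeval g : MvPolynomial σ K →ₐ[K] MvPolynomial σ K) := by
    apply le_antisymm
    · rw [Ideal.span_le]
      rintro _ ⟨i, hi, rfl⟩
      simp only [SetLike.mem_coe, RingHom.mem_ker, aeval_X, hg, if_pos hi]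
    · intro p hp
      rw [RingHom.mem_ker] at hp
      rw [mem_ideal_span_X_image]
      intro m hm
      by_contra hc
      push_neg at hc
      have := hcoeff p m hc
      rw [hp, coeff_zero] at this
      exact MvPolynomial.mem_support_iff.mp hm this.symm
  rw [hker]
  exact RingHom.ker_isPrime _

lemma geodesic_darts {V : Type} {T : SimpleGraph V} (hT : T.Connected) {q : V} :
    ∀ {a v : V} (p : T.Walk a v), T.dist q a + p.length = T.dist q v →
      ∀ d ∈ p.darts, T.dist q d.snd = T.dist q d.fst + 1 := by
  intro a v p
  induction p with
  | nil => intro _ d hd; simp at hd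
  | @cons a b v hadj p ih =>
    intro hlen d hd
    rw [SimpleGraph.Walk.length_cons] at hlen
    have hab : T.dist a b ≤ 1 := by
      have := T.dist_le (SimpleGraph.Walk.cons hadj SimpleGraph.Walk.nil)
      simpa using this
    have h1 : T.dist q b ≤ T.dist q a + 1 :=
      le_trans (hT.dist_triangle (v := a)) (by omega)
    have h2 : T.dist q v ≤ T.dist q b + p.length :=
      le_trans (hT.dist_triangle (v := b)) (by have := T.dist_le p; omega)
    have hb : T.dist q b = T.dist q a + 1 := by omega
    rw [SimpleGraph.Walk.darts_cons, List.mem_cons] at hd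
    rcases hd with rfl | hd
    · exact hb
    · exact ih (by omega) d hd

lemma prod_X_eq_monomial {σ K : Type} [Field K] (F : Finset σ) :
    (∏ e ∈ F, (X e : MvPolynomial σ K)) = monomial (∑ e ∈ F, Finsupp.single e 1) 1 := by
  classical
  induction F using Finset.induction with
  | empty => simp [monomial_zero']
  | @insert a F ha ih =>
    rw [Finset.prod_insert ha, Finset.sum_insert ha, ih, ← pow_one (X a : MvPolynomial σ K),
      X_pow_eq_monomial, monomial_mul, mul_one]

lemma cutExp_apply {σ : Type} [DecidableEq σ] (F : Finset σ) (a : σ) :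
    (∑ e ∈ F, Finsupp.single e 1 : σ →₀ ℕ) a = if a ∈ F then 1 else 0 := by
  rw [Finset.sum_apply']
  simp only [Finsupp.single_apply]
  rw [Finset.sum_ite_eq' F a (fun _ => 1)]

/-! ### The greedy construction of a spanning tree avoiding a set of darts -/

set_option linter.unusedSectionVars false

variable {V : Type} [Fintype V] [DecidableEq V]

inductive Builds (G : SimpleGraph V) (D : Set G.Dart) (q : V) : Finset V → List G.Dart → Prop
  | nil : Builds G D q {q} []
  | cons {A : Finset V} {L : List G.Dart} {d : G.Dart} :
      Builds G D q A L → d.fst ∉ A → d.snd ∈ A → d ∉ D →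
      Builds G D q (insert d.fst A) (d :: L)

namespace Builds

variable {G : SimpleGraph V} {D : Set G.Dart} {q : V} {A : Finset V} {L : List G.Dart}

lemma q_mem (h : Builds G D q A L) : q ∈ A := by
  induction h with
  | nil => exact Finset.mem_singleton_self q
  | cons _ _ _ _ ih => exact Finset.mem_insert_of_mem ih

lemma mem (h : Builds G D q A L) : ∀ d ∈ L, d.fst ∈ A ∧ d.snd ∈ A := by
  induction h with
  | nil => simp
  | @cons A L d _ hfst hsnd _ ih =>
    intro d' hd'
    rcases List.mem_cons.mp hd' with rfl | hd'
    · exact ⟨Finset.mem_insert_self _ _, Finset.mem_insert_of_mem hsnd⟩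
    · exact ⟨Finset.mem_insert_of_mem (ih d' hd').1, Finset.mem_insert_of_mem (ih d' hd').2⟩

lemma notD (h : Builds G D q A L) : ∀ d ∈ L, d ∉ D := by
  induction h with
  | nil => simp
  | cons _ _ _ hD ih =>
    intro d' hd'
    rcases List.mem_cons.mp hd' with rfl | hd'
    · exact hD
    · exact ih d' hd'

lemma head_unique (h : Builds G D q A L) :
    ∀ d ∈ L, ∀ d' ∈ L, d.fst = d'.fst → d = d' := by
  have hpw : L.Pairwise (fun a b => a.fst ≠ b.fst) := by
    induction h with
    | nil => exact List.Pairwise.nil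
    | @cons A L d hB hfst hsnd _ ih =>
      exact List.Pairwise.cons (fun b hb hEq => hfst (hEq ▸ (hB.mem b hb).1)) ih
  have hsym : Symmetric (fun a b : G.Dart => a.fst ≠ b.fst) := fun a b h h' => h h'.symm
  intro d hd d' hd' hfst
  by_contra hne
  haveI : Std.Symm (fun a b : G.Dart => a.fst ≠ b.fst) := ⟨hsym⟩
  exact hpw.forall hd hd' hne hfst

lemma heads (h : Builds G D q A L) : ∀ v ∈ A, v ≠ q → ∃ d ∈ L, d.fst = v := by
  induction h with
  | nil => intro v hv hvq; exact absurd (Finset.mem_singleton.mp hv) hvq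
  | @cons A L d _ hfst hsnd _ ih =>
    intro v hv hvq
    rcases Finset.mem_insert.mp hv with rfl | hv
    · exact ⟨d, List.mem_cons_self, rfl⟩
    · obtain ⟨d', hd', h'⟩ := ih v hv hvq
      exact ⟨d', List.mem_cons_of_mem _ hd', h'⟩

lemma exists_dep (h : Builds G D q A L) :
    ∃ dep : V → ℕ, dep q = 0 ∧ ∀ d ∈ L, dep d.fst = dep d.snd + 1 := by
  induction h with
  | nil => exact ⟨fun _ => 0, rfl, by simp⟩
  | @cons A L d hB hfst hsnd _ ih =>
    obtain ⟨dep, hq0, hdep⟩ := ih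
    have h1 : q ≠ d.fst := by intro h; rw [← h] at hfst; exact hfst hB.q_mem
    have h2 : d.snd ≠ d.fst := by intro h; rw [← h] at hfst; exact hfst hsnd
    refine ⟨Function.update dep d.fst (dep d.snd + 1), ?_, ?_⟩
    · rw [Function.update_of_ne h1, hq0]
    · intro d' hd'
      rcases List.mem_cons.mp hd' with rfl | hd'
      · rw [Function.update_self, Function.update_of_ne h2]
      · have h3 : d'.fst ≠ d.fst := by
          intro h; rw [← h] at hfst; exact hfst (hB.mem d' hd').1
        have h4 : d'.snd ≠ d.fst := by
          intro h; rw [← h] at hfst; exact hfst (hB.mem d' hd').2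
        rw [Function.update_of_ne h3, Function.update_of_ne h4]
        exact hdep d' hd'

end Builds

lemma exists_builds_univ {G : SimpleGraph V} {D : Set G.Dart} {q : V}
    (hD : ∀ A : Finset V, q ∈ A → A ≠ Finset.univ →
      ∃ e : G.Dart, e.fst ∉ A ∧ e.snd ∈ A ∧ e ∉ D) :
    ∃ L, Builds G D q Finset.univ L := by
  suffices h : ∀ (n : ℕ) (A : Finset V) (L : List G.Dart), Builds G D q A L →
      Aᶜ.card ≤ n → ∃ L', Builds G D q Finset.univ L' by
    exact h (Fintype.card V) {q} [] Builds.nil (Finset.card_le_univ _)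
  intro n
  induction n with
  | zero =>
    intro A L hB hc
    have : A = Finset.univ := by
      rw [← Finset.compl_eq_empty_iff, ← Finset.card_eq_zero]; omega
    exact ⟨L, this ▸ hB⟩
  | succ n ih =>
    intro A L hB hc
    by_cases hA : A = Finset.univ
    · exact ⟨L, hA ▸ hB⟩
    · obtain ⟨e, he1, he2, he3⟩ := hD A hB.q_mem hA
      have hB' := Builds.cons hB he1 he2 he3
      apply ih _ _ hB'
      have h1 : (insert e.fst A).card = A.card + 1 := Finset.card_insert_of_notMem he1
      have h2 := Finset.card_compl A
      have h3 := Finset.card_compl (insert e.fst A)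
      have h4 : (insert e.fst A).card ≤ Fintype.card V := Finset.card_le_univ _
      omega

/-- The graph built from the edges of a list of darts. -/
def treeOf {G : SimpleGraph V} (L : List G.Dart) : SimpleGraph V :=
  SimpleGraph.fromEdgeSet {s | ∃ d ∈ L, s = s(d.fst, d.snd)}

lemma treeOf_adj {G : SimpleGraph V} {L : List G.Dart} {x y : V} :
    (treeOf L).Adj x y ↔ (∃ d ∈ L, s(x, y) = s(d.fst, d.snd)) ∧ x ≠ y := by
  simp [treeOf, SimpleGraph.fromEdgeSet_adj, Set.mem_setOf_eq]

lemma treeOf_le {G : SimpleGraph V} {L : List G.Dart} : treeOf L ≤ G := by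
  intro x y hxy
  obtain ⟨⟨d, _, he⟩, _⟩ := treeOf_adj.mp hxy
  rcases Sym2.eq_iff.mp he with ⟨rfl, rfl⟩ | ⟨rfl, rfl⟩
  · exact d.adj
  · exact d.adj.symm

lemma treeOf_mono {G : SimpleGraph V} {L : List G.Dart} {d : G.Dart} :
    treeOf L ≤ treeOf (d :: L) :=
  SimpleGraph.fromEdgeSet_mono (fun s ⟨d', hd', h⟩ => ⟨d', List.mem_cons_of_mem _ hd', h⟩)

lemma Builds.reach {G : SimpleGraph V} {D : Set G.Dart} {q : V} {A : Finset V} {L : List G.Dart}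
    (h : Builds G D q A L) : ∀ v ∈ A, (treeOf L).Reachable q v := by
  induction h with
  | nil => intro v hv; rw [Finset.mem_singleton.mp hv]
  | @cons A L d hB hfst hsnd _ ih =>
    intro v hv
    rcases Finset.mem_insert.mp hv with rfl | hv
    · refine ((ih d.snd hsnd).mono treeOf_mono).trans (SimpleGraph.Adj.reachable ?_)
      refine treeOf_adj.mpr ⟨⟨d, List.mem_cons_self, Sym2.eq_swap⟩, ?_⟩
      intro h; exact hfst (h ▸ hsnd)
    · exact (ih v hv).mono treeOf_mono

lemma dep_le_of_walk {G : SimpleGraph V} {L : List G.Dart} {dep : V → ℕ}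
    (hdep : ∀ d ∈ L, dep d.fst = dep d.snd + 1)
    {a b : V} (w : (treeOf L).Walk a b) : dep b ≤ dep a + w.length := by
  induction w with
  | nil => simp
  | @cons x y z hadj w ih =>
    have hy : dep y ≤ dep x + 1 := by
      obtain ⟨⟨d, hd, he⟩, _⟩ := treeOf_adj.mp hadj
      have := hdep d hd
      rcases Sym2.eq_iff.mp he with ⟨rfl, rfl⟩ | ⟨rfl, rfl⟩ <;> omega
    rw [SimpleGraph.Walk.length_cons]
    omega

lemma exists_good_tree (G : SimpleGraph V) (q : V) (D : Set G.Dart)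
    (hD : ∀ A : Finset V, q ∈ A → A ≠ Finset.univ →
      ∃ e : G.Dart, e.fst ∉ A ∧ e.snd ∈ A ∧ e ∉ D) :
    ∃ T : SimpleGraph V, T ≤ G ∧ T.IsTree ∧
      ∀ e : G.Dart, T.Adj e.snd e.fst → T.dist q e.fst = T.dist q e.snd + 1 → e ∉ D := by
  obtain ⟨L, hB⟩ := exists_builds_univ hD
  obtain ⟨dep, hq0, hdep⟩ := hB.exists_dep
  set T := treeOf L with hT
  have hne : Nonempty V := ⟨q⟩
  have hconn : T.Connected :=
    ⟨fun u v => (hB.reach u (Finset.mem_univ u)).symm.trans (hB.reach v (Finset.mem_univ v))⟩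
  have hlow : ∀ v : V, dep v ≤ T.dist q v := by
    intro v
    obtain ⟨w, hw⟩ := hconn.exists_walk_length_eq_dist q v
    have := dep_le_of_walk hdep w
    omega
  have hupp : ∀ n, ∀ v : V, dep v ≤ n → T.dist q v ≤ dep v := by
    intro n
    induction n with
    | zero =>
      intro v hv
      by_cases hvq : v = q
      · subst hvq; simp [SimpleGraph.dist_self]
      · obtain ⟨d, hdL, rfl⟩ := hB.heads v (Finset.mem_univ v) hvq
        have := hdep d hdL
        omega
    | succ n ih =>
      intro v hv
      by_cases hvq : v = q
      · subst hvq; simp [SimpleGraph.dist_self]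
      · obtain ⟨d, hdL, rfl⟩ := hB.heads v (Finset.mem_univ v) hvq
        have hdd := hdep d hdL
        have hadj : T.Adj d.snd d.fst := by
          refine treeOf_adj.mpr ⟨⟨d, hdL, Sym2.eq_swap⟩, ?_⟩
          intro h; rw [h] at hdd; omega
        have h2 : T.dist q d.fst ≤ T.dist q d.snd + 1 := by
          obtain ⟨w, hw⟩ := hconn.exists_walk_length_eq_dist q d.snd
          have := T.dist_le (w.concat hadj)
          rw [SimpleGraph.Walk.length_concat] at this
          omega
        have h3 := ih d.snd (by omega)
        omega
  have hdist : ∀ v : V, T.dist q v = dep v :=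
    fun v => le_antisymm (hupp (dep v) v le_rfl) (hlow v)
  have hacyc : T.IsAcyclic := by
    rw [SimpleGraph.isAcyclic_iff_forall_adj_isBridge]
    intro x y hxy
    obtain ⟨⟨d, hdL, he⟩, hne'⟩ := treeOf_adj.mp hxy
    rw [he, SimpleGraph.isBridge_iff]
    have hdd := hdep d hdL
    · intro hreach
      set C : G.Dart → V → V → Prop := fun d a b => ∃ d' ∈ L, d'.snd = a ∧ d'.fst = b with hC
      set e0 : Sym2 V := s(d.fst, d.snd) with he0
      set T' := T \ SimpleGraph.fromEdgeSet {e0} with hT'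
      have hmono : ∀ x, Relation.ReflTransGen (C d) d.fst x → dep d.fst ≤ dep x := by
        intro x hx
        induction hx with
        | refl => exact le_rfl
        | tail _ hstep ih =>
          obtain ⟨d', hd', rfl, rfl⟩ := hstep
          have := hdep d' hd'
          omega
      have hstep : ∀ x y, Relation.ReflTransGen (C d) d.fst x → T'.Adj x y →
          Relation.ReflTransGen (C d) d.fst y := by
        intro x y hx hxy
        rw [hT', SimpleGraph.sdiff_adj] at hxy
        obtain ⟨hTxy, hdel⟩ := hxy
        have hne'' : s(x, y) ≠ e0 := by
          intro h
          exact hdel ((SimpleGraph.fromEdgeSet_adj _).mpr ⟨h ▸ Set.mem_singleton _, hTxy.ne⟩)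
        obtain ⟨⟨d', hd'L, he'⟩, _⟩ := treeOf_adj.mp hTxy
        rcases Sym2.eq_iff.mp he' with ⟨hx1, hy1⟩ | ⟨hx1, hy1⟩
        · -- x = d'.fst (child), y = d'.snd (parent): go up
          subst hx1; subst hy1
          by_cases hxd : d'.fst = d.fst
          · exfalso
            have hd'd : d' = d := hB.head_unique d' hd'L d hdL hxd
            apply hne''
            rw [he0, hd'd]
          · obtain h | ⟨c, hc, hcx⟩ := Relation.ReflTransGen.cases_tail hx
            · exact absurd h hxd
            · obtain ⟨d'', hd''L, h1, h2⟩ := hcx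
              have hd'd : d' = d'' := hB.head_unique d' hd'L d'' hd''L h2.symm
              rw [hd'd, h1]
              exact hc
        · -- x = d'.snd (parent), y = d'.fst (child): step down
          subst hx1; subst hy1
          exact hx.tail ⟨d', hd'L, rfl, rfl⟩
      have hwalk : ∀ (x z : V) (w : T'.Walk x z), Relation.ReflTransGen (C d) d.fst x →
          Relation.ReflTransGen (C d) d.fst z := by
        intro x z w
        induction w with
        | nil => exact id
        | cons hadj w ih => intro hx; exact ih (hstep _ _ hx hadj)
      obtain ⟨w⟩ := hreach
      have := hmono d.snd (hwalk _ _ w Relation.ReflTransGen.refl)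
      omega
  refine ⟨T, treeOf_le, ⟨hconn, hacyc⟩, ?_⟩
  intro e hadj hdist'
  obtain ⟨⟨d, hdL, he⟩, hne'⟩ := treeOf_adj.mp hadj
  have hdd := hdep d hdL
  rw [hdist e.fst, hdist e.snd] at hdist'
  rcases Sym2.eq_iff.mp he with ⟨h1, h2⟩ | ⟨h1, h2⟩
  · exfalso
    have h3 : dep e.fst = dep d.snd := congrArg dep h2
    have h4 : dep e.snd = dep d.fst := congrArg dep h1
    omega
  · have : e = d := SimpleGraph.Dart.ext _ _ (Prod.ext h2 h1)
    rw [this]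
    exact hB.notD d hdL

/-! ### The two ideals as spans of monomials -/

/-- The graphic oriented matroid ideal `O_G^q`: the ideal generated by the cut monomials
`∏_{e ∈ E(Aᶜ,A)} y_e` over all proper subsets `A ⊊ V` with `q ∈ A`.  A dart `e` has head
`e₊ = e.fst` and tail `e₋ = e.snd`, and `E(A,B)` is the set of darts with head in `A` and
tail in `B`. -/
noncomputable def orientedMatroidIdeal {V : Type} [Fintype V] [DecidableEq V]
    (G : SimpleGraph V) [DecidableRel G.Adj] (K : Type) [Field K] (q : V) :
    Ideal (MvPolynomial G.Dart K) :=
  Ideal.span {p | ∃ A : Finset V, A ≠ Finset.univ ∧ q ∈ A ∧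
    p = ∏ e ∈ univ.filter (fun e : G.Dart => e.fst ∈ Aᶜ ∧ e.snd ∈ A), X e}

/-- The prime ideal `P_T` associated to a spanning tree `T` of `G`: the ideal generated by
the variables `y_e` for darts `e` of `G` that are edges of `T` oriented away from `q`. -/
noncomputable def treeIdeal {V : Type} [Fintype V] [DecidableEq V]
    (G : SimpleGraph V) [DecidableRel G.Adj] (K : Type) [Field K]
    (T : SimpleGraph V) (q : V) : Ideal (MvPolynomial G.Dart K) :=
  Ideal.span {p | ∃ e : G.Dart, T.Adj e.snd e.fst ∧
    T.dist q e.fst = T.dist q e.snd + 1 ∧ p = X e}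

lemma treeIdeal_eq_span {V : Type} [Fintype V] [DecidableEq V]
    (G : SimpleGraph V) [DecidableRel G.Adj] (K : Type) [Field K]
    (T : SimpleGraph V) (q : V) :
    treeIdeal G K T q = Ideal.span (MvPolynomial.X ''
      {e : G.Dart | T.Adj e.snd e.fst ∧ T.dist q e.fst = T.dist q e.snd + 1}) := by
  unfold treeIdeal
  congr 1
  ext p
  constructor
  · rintro ⟨e, h1, h2, rfl⟩; exact ⟨e, ⟨h1, h2⟩, rfl⟩
  · rintro ⟨e, ⟨h1, h2⟩, rfl⟩; exact ⟨e, h1, h2, rfl⟩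

lemma orientedMatroidIdeal_eq_span {V : Type} [Fintype V] [DecidableEq V]
    (G : SimpleGraph V) [DecidableRel G.Adj] (K : Type) [Field K] (q : V) :
    orientedMatroidIdeal G K q = Ideal.span ((fun s => monomial s (1 : K)) ''
      {m : G.Dart →₀ ℕ | ∃ A : Finset V, A ≠ Finset.univ ∧ q ∈ A ∧
        m = ∑ e ∈ univ.filter (fun e : G.Dart => e.fst ∈ Aᶜ ∧ e.snd ∈ A),
          Finsupp.single e 1}) := by
  unfold orientedMatroidIdeal
  congr 1
  ext p
  constructor
  · rintro ⟨A, h1, h2, rfl⟩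
    exact ⟨_, ⟨A, h1, h2, rfl⟩, (prod_X_eq_monomial _).symm⟩
  · rintro ⟨m, ⟨A, h1, h2, rfl⟩, rfl⟩
    exact ⟨A, h1, h2, (prod_X_eq_monomial _).symm⟩

lemma cut_mem_treeIdeal {V : Type} [Fintype V] [DecidableEq V]
    (G : SimpleGraph V) [DecidableRel G.Adj] (K : Type) [Field K] (q : V)
    (T : SimpleGraph V) (hTG : T ≤ G) (hT : T.IsTree) (A : Finset V)
    (hA : A ≠ Finset.univ) (hq : q ∈ A) :
    (∏ e ∈ univ.filter (fun e : G.Dart => e.fst ∈ Aᶜ ∧ e.snd ∈ A), X e : MvPolynomial G.Dart K)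
      ∈ treeIdeal G K T q := by
  obtain ⟨v, hv⟩ : ∃ v, v ∉ A := by
    by_contra h; push_neg at h; exact hA (Finset.eq_univ_iff_forall.mpr h)
  obtain ⟨p, hp⟩ := hT.isConnected.exists_walk_length_eq_dist q v
  obtain ⟨d, hd, hd1, hd2⟩ := p.exists_boundary_dart (↑A : Set V)
    (by exact_mod_cast hq) (by exact_mod_cast hv)
  have hdist : T.dist q d.snd = T.dist q d.fst + 1 :=
    geodesic_darts hT.isConnected p (by simp [hp]) d hd
  set e : G.Dart := ⟨(d.snd, d.fst), hTG d.adj.symm⟩ with he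
  have he_mem : e ∈ univ.filter (fun e : G.Dart => e.fst ∈ Aᶜ ∧ e.snd ∈ A) := by
    simp only [Finset.mem_filter, Finset.mem_univ, true_and, Finset.mem_compl]
    exact ⟨by simpa using hd2, by simpa using hd1⟩
  have hXe : (X e : MvPolynomial G.Dart K) ∈ treeIdeal G K T q :=
    Ideal.subset_span ⟨e, d.adj, hdist, rfl⟩
  rw [← Finset.mul_prod_erase _ _ he_mem]
  exact Ideal.mul_mem_right _ _ hXe

/-! ### Main theorem -/

theorem stmt9 (V : Type) [Fintype V] [Nonempty V] [DecidableEq V]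
    (G : SimpleGraph V) [DecidableRel G.Adj] (hG : G.Connected)
    (K : Type) [Field K] (q : V) :
    orientedMatroidIdeal G K q =
      sInf {P : Ideal (MvPolynomial G.Dart K) |
        ∃ T : SimpleGraph V, T ≤ G ∧ T.IsTree ∧ P = treeIdeal G K T q} ∧
    ∀ T : SimpleGraph V, T ≤ G → T.IsTree →
      (treeIdeal G K T q (V := V)).IsPrime ∧
        orientedMatroidIdeal G K q ≤ treeIdeal G K T q := by
  classical
  have hle : ∀ T : SimpleGraph V, T ≤ G → T.IsTree →
      orientedMatroidIdeal G K q ≤ treeIdeal G K T q := by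
    intro T hTG hT
    rw [orientedMatroidIdeal, Ideal.span_le]
    rintro p ⟨A, hA, hq, rfl⟩
    exact cut_mem_treeIdeal G K q T hTG hT A hA hq
  refine ⟨le_antisymm (le_sInf ?_) ?_, fun T hTG hT =>
    ⟨treeIdeal_eq_span G K T q ▸ span_X_isPrime K _, hle T hTG hT⟩⟩
  · rintro P ⟨T, hTG, hT, rfl⟩
    exact hle T hTG hT
  · intro p hp
    rw [Ideal.mem_sInf] at hp
    rw [orientedMatroidIdeal_eq_span, mem_ideal_span_monomial_image]
    intro xi hxi
    by_contra hc
    push_neg at hc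
    have hD : ∀ A : Finset V, q ∈ A → A ≠ Finset.univ →
        ∃ e : G.Dart, e.fst ∉ A ∧ e.snd ∈ A ∧ e ∉ {e : G.Dart | xi e ≠ 0} := by
      intro A hqA hA
      have := hc _ ⟨A, hA, hqA, rfl⟩
      rw [Finsupp.le_def] at this
      push_neg at this
      obtain ⟨a, ha⟩ := this
      rw [cutExp_apply] at ha
      by_cases haF : a ∈ univ.filter (fun e : G.Dart => e.fst ∈ Aᶜ ∧ e.snd ∈ A)
      · rw [if_pos haF] at ha
        simp only [Finset.mem_filter, Finset.mem_univ, true_and, Finset.mem_compl] at haF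
        exact ⟨a, haF.1, haF.2, by simp only [Set.mem_setOf_eq, not_not]; omega⟩
      · rw [if_neg haF] at ha; omega
    obtain ⟨T, hTG, hT, hgood⟩ := exists_good_tree G q _ hD
    have hpT : p ∈ treeIdeal G K T q := hp ⟨T, hTG, hT, rfl⟩
    rw [treeIdeal_eq_span, mem_ideal_span_X_image] at hpT
    obtain ⟨e, he, hne⟩ := hpT xi hxi
    exact (hgood e he.1 he.2) hne
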